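/- For a non-crossing partition π of {1,...,m} with all blocks of size 1 or 2, and a two-coloring p of {1,...,m}: the merged partition F(π) (obtained by merging each two-element block with its direct inner singleton blocks) respects the coloring p if and only if π respects p and every singleton block of π that is a direct inner block of a two-element block B has the same color as B. -/
import Mathlib


namespace JM

/-- A collection of sets is a partition of `Fin m`. -/
def IsPartitionOn {m : ℕ} (π : Set (Set (Fin m))) : Prop :=
  (∀ B ∈ π, B.Nonempty) ∧ (∀ x : Fin m, ∃ B ∈ π, x ∈ B) ∧
  (∀ B ∈ π, ∀ B' ∈ π, (B ∩ B').Nonempty → B = B')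

/-- The partition is non-crossing. -/
def Noncrossing {m : ℕ} (π : Set (Set (Fin m))) : Prop :=
  ∀ B ∈ π, ∀ B' ∈ π, B ≠ B' →
    ¬ ∃ k1 l1 k2 l2 : Fin m, k1 < l1 ∧ l1 < k2 ∧ k2 < l2 ∧
      k1 ∈ B ∧ k2 ∈ B ∧ l1 ∈ B' ∧ l2 ∈ B'

/-- `B` is an inner block of `B'`. -/
def Inner {m : ℕ} (B B' : Set (Fin m)) : Prop :=
  (∃ p ∈ B', ∀ b ∈ B, p < b) ∧ (∃ q ∈ B', ∀ b ∈ B, b < q)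

/-- `B` is a direct inner block of `B''` in π. -/
def DirectInner {m : ℕ} (π : Set (Set (Fin m))) (B B'' : Set (Fin m)) : Prop :=
  Inner B B'' ∧ ¬ ∃ B' ∈ π, Inner B B' ∧ Inner B' B''

/-- Non-crossing partitions with blocks of size 1 or 2, each singleton inner to a 2-block. -/
def NC1lt2 (m : ℕ) : Set (Set (Set (Fin m))) :=
  {π | IsPartitionOn π ∧ Noncrossing π ∧ (∀ B ∈ π, B.ncard = 1 ∨ B.ncard = 2) ∧
    ∀ B ∈ π, B.ncard = 1 → ∃ B' ∈ π, B'.ncard = 2 ∧ Inner B B'}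

/-- Non-crossing partitions all of whose blocks have size at least two. -/
def NCge2 (m : ℕ) : Set (Set (Set (Fin m))) :=
  {π | IsPartitionOn π ∧ Noncrossing π ∧ ∀ B ∈ π, 2 ≤ B.ncard}

/-- The merging map `F`: each 2-block is merged with its direct inner singletons. -/
def Fmap {m : ℕ} (π : Set (Set (Fin m))) : Set (Set (Fin m)) :=
  {C | ∃ B ∈ π, B.ncard = 2 ∧
    C = B ∪ {x | ∃ S ∈ π, S = {x} ∧ DirectInner π S B}}

/-- The splitting map `G`: from each block of size at least 3, every element except the
minimum and the maximum is placed in its own singleton block. -/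
def Gmap {m : ℕ} (π : Set (Set (Fin m))) : Set (Set (Fin m)) :=
  {C | (∃ B ∈ π, B.ncard ≤ 2 ∧ C = B) ∨
    (∃ B ∈ π, 3 ≤ B.ncard ∧ ∃ x ∈ B, (∃ y ∈ B, y < x) ∧ (∃ z ∈ B, x < z) ∧ C = {x}) ∨
    (∃ B ∈ π, 3 ≤ B.ncard ∧ ∃ y ∈ B, ∃ z ∈ B,
      (∀ b ∈ B, y ≤ b) ∧ (∀ b ∈ B, b ≤ z) ∧ C = {y, z})}

/-- Minimal number of transpositions needed to write σ as a product. -/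
noncomputable def permLength {β : Type*} [DecidableEq β] [Fintype β] (σ : Equiv.Perm β) : ℕ :=
  sInf {k | ∃ l : List (Equiv.Perm β), l.length = k ∧ (∀ t ∈ l, t.IsSwap) ∧ l.prod = σ}

/-- The element 2n+1 of {1,…,2n+1}. -/
def jmTop (n : ℕ) : Fin (2*n+1) := Fin.last (2*n)

/-- The tuple of Jucys-Murphy transpositions (αᵢ, 2n+1). -/
def jmTuple {n m : ℕ} (α : Fin m → Fin (2*n+1)) : Fin m → Equiv.Perm (Fin (2*n+1)) :=
  fun i => Equiv.swap (α i) (jmTop n)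

/-- The partition of indices grouping equal values of α. -/
def eqPartition {m : ℕ} {β : Type*} (α : Fin m → β) : Set (Set (Fin m)) :=
  {B | ∃ j : Fin m, B = {i | α i = α j}}

/-- A partition respects a two-coloring. -/
def Respects {m : ℕ} (π : Set (Set (Fin m))) (c : Fin m → Bool) : Prop :=
  ∀ B ∈ π, ∀ i ∈ B, ∀ j ∈ B, c i = c j

/-- Membership in the subgroup S_n × S_n × {e} of S_{2n+1}. -/
def InH (n : ℕ) (σ : Equiv.Perm (Fin (2*n+1))) : Prop :=
  (∀ x : Fin (2*n+1), (x:ℕ) < n → ((σ x : Fin (2*n+1)) : ℕ) < n) ∧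
  (∀ x : Fin (2*n+1), n ≤ (x:ℕ) → (x:ℕ) < 2*n →
    n ≤ ((σ x : Fin (2*n+1)) : ℕ) ∧ ((σ x : Fin (2*n+1)) : ℕ) < 2*n) ∧
  σ (jmTop n) = jmTop n

def e1 (n : ℕ) : Fin n ≃ {x : Fin (2*n+1) // (x:ℕ) < n} where
  toFun i := ⟨⟨i, by omega⟩, i.isLt⟩
  invFun x := ⟨(x.1 : ℕ), x.2⟩
  left_inv i := rfl
  right_inv x := rfl

def e2 (n : ℕ) : Fin n ≃ {x : Fin (2*n+1) // n ≤ (x:ℕ) ∧ (x:ℕ) < 2*n} where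
  toFun i := ⟨⟨n + i, by omega⟩, by simp only [Fin.val_mk]; omega⟩
  invFun x := ⟨(x.1 : ℕ) - n, by have := x.2; omega⟩
  left_inv i := by ext; simp
  right_inv x := by
    rcases x with ⟨x, hx⟩
    exact Subtype.ext (Fin.ext (by simp; omega))

/-- Embed a permutation of `Fin n` as a permutation of `Fin (2n+1)` acting on {1,…,n}. -/
def lift1 {n : ℕ} (τ : Equiv.Perm (Fin n)) : Equiv.Perm (Fin (2*n+1)) :=
  τ.extendDomain (e1 n)

/-- Embed a permutation of `Fin n` as a permutation of `Fin (2n+1)` acting on {n+1,…,2n}. -/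
def lift2 {n : ℕ} (τ : Equiv.Perm (Fin n)) : Equiv.Perm (Fin (2*n+1)) :=
  τ.extendDomain (e2 n)

/-- F(π) respects a two-coloring iff π respects it and every direct inner
singleton of a two-element block has the same color as that block. -/
theorem F_respects_iff (m : ℕ) (π : Set (Set (Fin m))) (hπ : π ∈ NC1lt2 m)
    (c : Fin m → Bool) :
    Respects (Fmap π) c ↔
      (Respects π c ∧ ∀ S ∈ π, ∀ B ∈ π, S.ncard = 1 → B.ncard = 2 →
        DirectInner π S B → ∀ i ∈ S, ∀ j ∈ B, c i = c j) := by
  constructor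
  · intro hF
    constructor
    · intro B hB i hi j hj
      rcases hπ.2.2.1 B hB with h1 | h2
      · rcases Set.ncard_eq_one.mp h1 with ⟨x, rfl⟩
        simp_all
      · have hC : B ∪ {x | ∃ S ∈ π, S = {x} ∧ DirectInner π S B} ∈ Fmap π :=
          ⟨B, hB, h2, rfl⟩
        exact hF _ hC i (Or.inl hi) j (Or.inl hj)
    · intro S hS B hB hS1 hB2 hDI i hi j hj
      have hC : B ∪ {x | ∃ S ∈ π, S = {x} ∧ DirectInner π S B} ∈ Fmap π :=
        ⟨B, hB, hB2, rfl⟩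
      rcases Set.ncard_eq_one.mp hS1 with ⟨x, rfl⟩
      have hix : i = x := hi
      subst hix
      exact hF _ hC i (Or.inr ⟨{i}, hS, rfl, hDI⟩) j (Or.inl hj)
  · rintro ⟨hR, hDI⟩ C ⟨B, hB, hB2, rfl⟩ i hi j hj
    have hBne : B.Nonempty := hπ.1.1 B hB
    obtain ⟨b, hb⟩ := hBne
    have key : ∀ x, x ∈ B ∪ {x | ∃ S ∈ π, S = {x} ∧ DirectInner π S B} → c x = c b := by
      rintro x (hx | ⟨S, hS, rfl, hd⟩)
      · exact hR B hB x hx b hb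
      · exact hDI _ hS B hB (Set.ncard_singleton x) hB2 hd x rfl b hb
    rw [key i hi, key j hj]

end JM
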